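/- Fix p_H ∈ (0,1), δ ∈ (0,p_H), and α_L, α_H ∈ (1/2,1). There exists λ ∈ ℝ with β_L(λ) ≥ α_L and β_H(λ) ≥ α_H (normal-approximation PCS constraints) if and only if n ≥ n*, where n* = ((√(2p_H(1−p_H))Φ⁻¹(α_L) − √((p_H−δ)(1−p_H+δ)+p_H(1−p_H))Φ⁻¹(1−α_H))/δ)². -/

import Mathlib

open MeasureTheory ProbabilityTheory Set

noncomputable def stdNormalCDF (x : ℝ) : ℝ := ((gaussianReal 0 1) (Set.Iic x)).toReal

noncomputable def stdNormalCDFInv : ℝ → ℝ := Function.invFun stdNormalCDF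

lemma stdNormalCDF_eq_integral (x : ℝ) :
    stdNormalCDF x = ∫ t in Iic x, gaussianPDFReal 0 1 t := by
  rw [stdNormalCDF, gaussianReal_apply_eq_integral 0 one_ne_zero,
    ENNReal.toReal_ofReal (integral_nonneg fun t => gaussianPDFReal_nonneg 0 1 t)]

lemma stdNormalCDF_strictMono : StrictMono stdNormalCDF := by
  intro x y hxy
  have hint := integrable_gaussianPDFReal 0 1
  have hsplit : stdNormalCDF y = stdNormalCDF x + ∫ t in Ioc x y, gaussianPDFReal 0 1 t := by
    rw [stdNormalCDF_eq_integral, stdNormalCDF_eq_integral,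
      ← setIntegral_union (Set.Iic_disjoint_Ioc le_rfl) measurableSet_Ioc
        hint.integrableOn hint.integrableOn, Set.Iic_union_Ioc_eq_Iic hxy.le]
  have hpos : 0 < ∫ t in Ioc x y, gaussianPDFReal 0 1 t := by
    rw [setIntegral_pos_iff_support_of_nonneg_ae
      (ae_of_all _ fun t => gaussianPDFReal_nonneg 0 1 t) hint.integrableOn]
    have hsupp : Function.support (gaussianPDFReal 0 1) ∩ Ioc x y = Ioc x y := by
      refine inter_eq_right.mpr fun t _ => ?_
      exact Function.mem_support.mpr (gaussianPDFReal_pos 0 1 t one_ne_zero).ne'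
    rw [hsupp, Real.volume_Ioc]
    simp [hxy]
  linarith [hsplit]

lemma stdNormalCDF_continuous : Continuous stdNormalCDF := by
  have h : ∀ x, stdNormalCDF x = stdNormalCDF 0 + ∫ t in (0:ℝ)..x, gaussianPDFReal 0 1 t := by
    intro x
    rw [stdNormalCDF_eq_integral, stdNormalCDF_eq_integral,
      ← intervalIntegral.integral_Iic_sub_Iic (integrable_gaussianPDFReal 0 1).integrableOn
        (integrable_gaussianPDFReal 0 1).integrableOn]
    ring
  rw [funext h]
  exact continuous_const.add ((integrable_gaussianPDFReal 0 1).continuous_primitive 0)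

lemma stdNormalCDF_zero : stdNormalCDF 0 = 1/2 := by
  set m := gaussianReal 0 1 with hm
  have hmap : m.map (fun x => (-1:ℝ) * x) = m := by
    rw [hm, gaussianReal_map_const_mul (-1)]
    norm_num
  have h1 : m (Iic 0) = m (Ici 0) := by
    conv_lhs => rw [← hmap]
    rw [Measure.map_apply (by fun_prop) measurableSet_Iic]
    congr 1
    ext z
    simp only [mem_preimage, mem_Iic, mem_Ici]
    constructor <;> intro h <;> linarith
  have h0 : m {(0:ℝ)} = 0 :=
    gaussianReal_absolutelyContinuous 0 one_ne_zero Real.volume_singleton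
  have hIci : m (Ici 0) = m (Ioi 0) := by
    have : Ici (0:ℝ) = {0} ∪ Ioi 0 := by
      ext z; simp [le_iff_lt_or_eq, or_comm, eq_comm]
    rw [this, measure_union (by simp [Set.disjoint_left]) measurableSet_Ioi, h0, zero_add]
  have hsum : m (Iic 0) + m (Ioi 0) = 1 := by
    rw [← measure_union (Set.Iic_disjoint_Ioi le_rfl) measurableSet_Ioi,
      Set.Iic_union_Ioi, measure_univ]
  rw [h1, hIci] at hsum
  have hne : m (Ioi 0) ≠ ⊤ := measure_ne_top m _
  have h2 : (m (Ioi 0)).toReal + (m (Ioi 0)).toReal = 1 := by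
    rw [← ENNReal.toReal_add hne hne, hsum, ENNReal.toReal_one]
  have : stdNormalCDF 0 = (m (Ioi 0)).toReal := by
    rw [stdNormalCDF, ← hm, h1, hIci]
  linarith

lemma stdNormalCDF_mem_range (p : ℝ) (hp : p ∈ Ioo (0:ℝ) 1) :
    ∃ x, stdNormalCDF x = p := by
  have hcdf : stdNormalCDF = cdf (gaussianReal 0 1) := by
    funext x; rw [stdNormalCDF, cdf_eq_real, measureReal_def]
  have hbot : Filter.Tendsto stdNormalCDF Filter.atBot (nhds 0) := by
    rw [hcdf]; exact tendsto_cdf_atBot _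
  have htop : Filter.Tendsto stdNormalCDF Filter.atTop (nhds 1) := by
    rw [hcdf]; exact tendsto_cdf_atTop _
  obtain ⟨a, ha⟩ := (hbot.eventually_lt_const hp.1).exists
  obtain ⟨b, hb⟩ := (htop.eventually_const_lt hp.2).exists
  have := intermediate_value_univ a b stdNormalCDF_continuous
  exact this ⟨ha.le, hb.le⟩

lemma stdNormalCDF_invFun (p : ℝ) (hp : p ∈ Ioo (0:ℝ) 1) :
    stdNormalCDF (stdNormalCDFInv p) = p :=
  Function.invFun_eq (stdNormalCDF_mem_range p hp)

lemma le_stdNormalCDF_iff {p : ℝ} (hp : p ∈ Ioo (0:ℝ) 1) (y : ℝ) :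
    p ≤ stdNormalCDF y ↔ stdNormalCDFInv p ≤ y := by
  conv_lhs => rw [← stdNormalCDF_invFun p hp]
  exact stdNormalCDF_strictMono.le_iff_le

lemma stdNormalCDF_le_iff {p : ℝ} (hp : p ∈ Ioo (0:ℝ) 1) (y : ℝ) :
    stdNormalCDF y ≤ p ↔ y ≤ stdNormalCDFInv p := by
  conv_lhs => rw [← stdNormalCDF_invFun p hp]
  exact stdNormalCDF_strictMono.le_iff_le

lemma stdNormalCDFInv_pos {p : ℝ} (hp : p ∈ Ioo (1/2:ℝ) 1) : 0 < stdNormalCDFInv p := by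
  have h := (le_stdNormalCDF_iff ⟨by linarith [hp.1], hp.2⟩ (stdNormalCDFInv p)).mp
    (stdNormalCDF_invFun p ⟨by linarith [hp.1], hp.2⟩).ge
  by_contra hcon
  push_neg at hcon
  have := stdNormalCDF_strictMono.monotone hcon
  rw [stdNormalCDF_invFun p ⟨by linarith [hp.1], hp.2⟩, stdNormalCDF_zero] at this
  linarith [hp.1]

lemma stdNormalCDFInv_neg {p : ℝ} (hp : p ∈ Ioo (0:ℝ) (1/2)) : stdNormalCDFInv p < 0 := by
  by_contra hcon
  push_neg at hcon
  have := stdNormalCDF_strictMono.monotone hcon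
  rw [stdNormalCDF_invFun p ⟨hp.1, by linarith [hp.2]⟩, stdNormalCDF_zero] at this
  linarith [hp.2]

theorem feasible_iff_sample_size_at_least_nstar
    (pH δ αL αH n : ℝ) (hpH : pH ∈ Set.Ioo (0:ℝ) 1) (hδ : δ ∈ Set.Ioo (0:ℝ) pH)
    (hαL : αL ∈ Set.Ioo (1/2 : ℝ) 1) (hαH : αH ∈ Set.Ioo (1/2 : ℝ) 1) (hn : 0 < n)
    (nstar : ℝ)
    (hnstar : nstar = ((Real.sqrt (2 * pH * (1 - pH)) * stdNormalCDFInv αL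
        - Real.sqrt ((pH - δ) * (1 - pH + δ) + pH * (1 - pH)) * stdNormalCDFInv (1 - αH))
        / δ) ^ 2) :
    (∃ lam : ℝ,
      αL ≤ stdNormalCDF (Real.sqrt n * lam / Real.sqrt (2 * pH * (1 - pH))) ∧
      αH ≤ 1 - stdNormalCDF (Real.sqrt n * (lam - δ)
          / Real.sqrt ((pH - δ) * (1 - pH + δ) + pH * (1 - pH))))
      ↔ nstar ≤ n := by
  obtain ⟨hpH0, hpH1⟩ := hpH
  obtain ⟨hδ0, hδp⟩ := hδ
  set sL := Real.sqrt (2 * pH * (1 - pH)) with hsL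
  set sH := Real.sqrt ((pH - δ) * (1 - pH + δ) + pH * (1 - pH)) with hsH
  set q := Real.sqrt n with hq'
  set a := stdNormalCDFInv αL with ha'
  set b := stdNormalCDFInv (1 - αH) with hb'
  have hsLpos : 0 < sL := Real.sqrt_pos.mpr (by nlinarith)
  have hsHpos : 0 < sH := Real.sqrt_pos.mpr (by nlinarith)
  have hq : 0 < q := Real.sqrt_pos.mpr hn
  have haIoo : αL ∈ Ioo (0:ℝ) 1 := ⟨by linarith [hαL.1], hαL.2⟩
  have hbIoo : (1 - αH) ∈ Ioo (0:ℝ) 1 := ⟨by linarith [hαH.2], by linarith [hαH.1]⟩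
  have hapos : 0 < a := stdNormalCDFInv_pos hαL
  have hbneg : b < 0 := stdNormalCDFInv_neg ⟨hbIoo.1, by linarith [hαH.1]⟩
  set c := (sL * a - sH * b) / δ with hc'
  have hc : 0 ≤ c := div_nonneg (by nlinarith) hδ0.le
  have hnq : n = q ^ 2 := (Real.sq_sqrt hn.le).symm
  have key : (∃ lam : ℝ,
      αL ≤ stdNormalCDF (q * lam / sL) ∧
      αH ≤ 1 - stdNormalCDF (q * (lam - δ) / sH)) ↔ sL * a / q ≤ δ + sH * b / q := by
    constructor
    · rintro ⟨lam, h1, h2⟩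
      rw [le_stdNormalCDF_iff haIoo] at h1
      have h2' : stdNormalCDF (q * (lam - δ) / sH) ≤ 1 - αH := by linarith
      rw [stdNormalCDF_le_iff hbIoo] at h2'
      rw [← ha', le_div_iff₀ hsLpos] at h1
      rw [← hb', div_le_iff₀ hsHpos] at h2'
      have e1 : sL * a / q ≤ lam := by
        rw [div_le_iff₀ hq]; nlinarith
      have e2 : lam ≤ δ + sH * b / q := by
        rw [← sub_le_iff_le_add', le_div_iff₀ hq]; nlinarith
      linarith
    · intro hle
      refine ⟨sL * a / q, ?_, ?_⟩
      · rw [le_stdNormalCDF_iff haIoo, ← ha']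
        have : q * (sL * a / q) / sL = a := by field_simp
        rw [this]
      · have h3 : (sL * a / q - δ) * q ≤ sH * b := (le_div_iff₀ hq).mp (by linarith)
        have h4 : stdNormalCDF (q * (sL * a / q - δ) / sH) ≤ 1 - αH := by
          rw [stdNormalCDF_le_iff hbIoo, ← hb', div_le_iff₀ hsHpos]
          nlinarith
        linarith
  rw [key]
  have hiff : sL * a / q ≤ δ + sH * b / q ↔ sL * a - sH * b ≤ δ * q := by
    rw [div_le_iff₀ hq, add_mul, div_mul_cancel₀ _ hq.ne']
    constructor <;> intro h <;> linarith
  have hiff2 : c ≤ q ↔ sL * a - sH * b ≤ δ * q := by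
    rw [hc', div_le_iff₀ hδ0]
    constructor <;> intro h <;> nlinarith
  have hiff3 : nstar ≤ n ↔ c ≤ q := by
    rw [hnstar, hnq]
    constructor <;> intro h <;> nlinarith
  rw [hiff, ← hiff2, hiff3]
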